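/- For j = 1,2, let μ_{0,j} be a nonnegative finite Borel measure on ℝ with C_j = μ_{0,j}(ℝ) > 0 and distribution function F_{0,j}(x) = μ_{0,j}((−∞,x)), satisfying the moment condition ∫_{−∞}^{0} F_{0,j}(x) dx + ∫_{0}^{∞} (C_j − F_{0,j}(x)) dx < ∞, and let u_{0,j} : ℝ → ℝ be continuous and bounded. Define χ_{0,j}(η) = sup{x ∈ ℝ : F_{0,j}(x) < η} and 𝒰_{0,j}(η) = u_{0,j}(χ_{0,j}(η)) for η ∈ (0,C_j), and the evolved quantities χ_j(t,η) = (t²/4)(η − C_j/2) + t𝒰_{0,j}(η) + χ_{0,j}(η), 𝒰_j(t,η) = (t/2)(η − C_j/2) + 𝒰_{0,j}(η). Define d(t) = ‖𝒰₁(t,C₁·) − 𝒰₂(t,C₂·)‖_{L^∞((0,1))} + ‖χ₁(t,C₁·) − χ₂(t,C₂·)‖_{L¹((0,1))} + |C₁ − C₂|. Then for every t ≥ 0, d(t) is finite and d(t) ≤ (1 + t + t²/8) d(0). -/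

import Mathlib

open MeasureTheory Set ENNReal

lemma nnnorm_decomp (r : ℝ) :
    (‖r‖₊ : ℝ≥0∞) = ENNReal.ofReal r + ENNReal.ofReal (-r) := by
  rcases le_total 0 r with h | h
  · simp [← enorm_eq_nnnorm, Real.enorm_eq_ofReal_abs, abs_of_nonneg h,
      ENNReal.ofReal_eq_zero.2 (neg_nonpos.2 h)]
  · simp [← enorm_eq_nnnorm, Real.enorm_eq_ofReal_abs, abs_of_nonpos h, ENNReal.ofReal_eq_zero.2 h]

lemma pseudoinv_aux (μ : Measure ℝ) [IsFiniteMeasure μ] (C : ℝ)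
    (hC : C = (μ univ).toReal) (hCpos : 0 < C) (F : ℝ → ℝ)
    (hF : ∀ x, F x = (μ (Iio x)).toReal)
    (hmom1 : IntegrableOn F (Iio 0))
    (hmom2 : IntegrableOn (fun x => C - F x) (Ioi 0)) :
    MonotoneOn (fun η => sSup {x | F x < C * η}) (Ioo (0:ℝ) 1) ∧
    IntegrableOn (fun η => sSup {x | F x < C * η}) (Ioo (0:ℝ) 1) := by
  have Fmono : Monotone F := by
    intro a b hab
    rw [hF, hF]
    exact ENNReal.toReal_mono (measure_ne_top μ _) (measure_mono (Iio_subset_Iio hab))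
  have Fnn : ∀ x, 0 ≤ F x := fun x => by rw [hF]; exact ENNReal.toReal_nonneg
  have FleC : ∀ x, F x ≤ C := fun x => by
    rw [hF, hC]
    exact ENNReal.toReal_mono (measure_ne_top μ _) (measure_mono (subset_univ _))
  have hne : ∀ η : ℝ, 0 < η → {x | F x < η}.Nonempty := by
    intro η hη
    by_contra h
    push_neg at h
    simp only [not_nonempty_iff_eq_empty, eq_empty_iff_forall_notMem, mem_setOf_eq,
      not_lt] at h
    have hconst : Integrable (fun _ : ℝ => η) (volume.restrict (Iio 0)) := by
      refine hmom1.mono' aestronglyMeasurable_const ?_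
      filter_upwards with x
      rw [Real.norm_eq_abs, abs_of_pos hη]
      exact h x
    rw [integrable_const_iff] at hconst
    rcases hconst with h0 | hlt
    · exact hη.ne' h0
    · simp [isFiniteMeasure_restrict, Real.volume_Iio] at hlt
  have hbdd : ∀ η : ℝ, η < C → BddAbove {x | F x < η} := by
    intro η hη
    have hx0 : ∃ x₀, η ≤ F x₀ := by
      by_contra h
      push_neg at h
      have hconst : Integrable (fun _ : ℝ => C - η) (volume.restrict (Ioi 0)) := by
        refine hmom2.mono' aestronglyMeasurable_const ?_
        filter_upwards with x
        rw [Real.norm_eq_abs, abs_of_pos (by linarith)]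
        have := h x
        linarith
      rw [integrable_const_iff] at hconst
      rcases hconst with h0 | hlt
      · linarith [sub_eq_zero.1 h0]
      · simp [isFiniteMeasure_restrict, Real.volume_Ioi] at hlt
    obtain ⟨x₀, hx₀⟩ := hx0
    refine ⟨x₀, fun y hy => ?_⟩
    by_contra hcon
    push_neg at hcon
    exact absurd (lt_of_le_of_lt (hx₀.trans (Fmono hcon.le)) hy) (lt_irrefl _)
  have key1 : ∀ t η : ℝ, 0 < η → t < sSup {x | F x < η} → F t < η := by
    intro t η hη hlt
    obtain ⟨x, hx, htx⟩ := exists_lt_of_lt_csSup (hne η hη) hlt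
    exact lt_of_le_of_lt (Fmono htx.le) hx
  have key2 : ∀ a η : ℝ, η < C → sSup {x | F x < η} < a → η ≤ F a := by
    intro a η hη hlt
    by_contra h
    push_neg at h
    exact absurd (le_csSup (hbdd η hη) h) (not_le.2 hlt)
  set H : ℝ → ℝ := fun η => sSup {x | F x < C * η} with hH
  have hmemC : ∀ η : ℝ, η ∈ Ioo (0:ℝ) 1 → 0 < C * η ∧ C * η < C := by
    intro η hη
    constructor
    · exact mul_pos hCpos hη.1
    · nlinarith [hη.2]
  have monoH : MonotoneOn H (Ioo (0:ℝ) 1) := by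
    intro a ha b hb hab
    exact csSup_le_csSup (hbdd _ (hmemC b hb).2) (hne _ (hmemC a ha).1)
      (fun x hx => lt_of_lt_of_le hx (mul_le_mul_of_nonneg_left hab hCpos.le))
  set ν := volume.restrict (Ioo (0:ℝ) 1) with hν
  have hmeas : AEMeasurable H ν := aemeasurable_restrict_of_monotoneOn measurableSet_Ioo monoH
  have haemem : ∀ᵐ η ∂ν, η ∈ Ioo (0:ℝ) 1 := ae_restrict_mem measurableSet_Ioo
  -- positive part
  have hP : ∫⁻ η, ENNReal.ofReal (H η) ∂ν < ⊤ := by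
    have h0 : ∫⁻ η, ENNReal.ofReal (H η) ∂ν = ∫⁻ η, ENNReal.ofReal (max (H η) 0) ∂ν := by
      refine lintegral_congr fun η => ?_
      rcases le_total (H η) 0 with h | h
      · simp [max_eq_right h, ENNReal.ofReal_eq_zero.2 h]
      · rw [max_eq_left h]
    rw [h0, lintegral_eq_lintegral_meas_lt (f := fun η => max (H η) 0) ν
      (Filter.Eventually.of_forall fun η => le_max_right _ _) (hmeas.max aemeasurable_const)]
    have hbound : ∀ t ∈ Ioi (0:ℝ),
        ν {η | t < max (H η) 0} ≤ ENNReal.ofReal (1/C) * ‖C - F t‖₊ := by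
      intro t ht
      have hsub : {η | t < max (H η) 0} ∩ Ioo 0 1 ⊆ Ioo (F t / C) 1 := by
        rintro η ⟨hη1, hη2⟩
        have hHη : t < H η := by
          rcases lt_max_iff.1 (show t < max _ 0 from hη1) with h | h
          · exact h
          · linarith [mem_Ioi.1 ht]
        have hFt : F t < C * η := key1 t _ (hmemC η hη2).1 hHη
        exact ⟨(div_lt_iff₀ hCpos).2 (by linarith [mul_comm C η ▸ hFt]), hη2.2⟩
      calc ν {η | t < max (H η) 0}
          = volume ({η | t < max (H η) 0} ∩ Ioo 0 1) :=
            Measure.restrict_apply' measurableSet_Ioo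
        _ ≤ volume (Ioo (F t / C) 1) := measure_mono hsub
        _ = ENNReal.ofReal (1 - F t / C) := Real.volume_Ioo
        _ = ENNReal.ofReal ((1/C) * (C - F t)) := by
            congr 1
            field_simp
        _ = ENNReal.ofReal (1/C) * ENNReal.ofReal (C - F t) :=
            ENNReal.ofReal_mul (by positivity)
        _ ≤ ENNReal.ofReal (1/C) * ‖C - F t‖₊ := by
            gcongr
            exact Real.ofReal_le_enorm _
    calc ∫⁻ t in Ioi (0:ℝ), ν {η | t < max (H η) 0}
        ≤ ∫⁻ t in Ioi (0:ℝ), ENNReal.ofReal (1/C) * ‖C - F t‖₊ := by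
          refine lintegral_mono_ae ?_
          filter_upwards [ae_restrict_mem measurableSet_Ioi] with t ht
          exact hbound t ht
      _ = ENNReal.ofReal (1/C) * ∫⁻ t in Ioi (0:ℝ), (‖C - F t‖₊ : ℝ≥0∞) :=
          lintegral_const_mul' _ _ ENNReal.ofReal_ne_top
      _ < ⊤ := ENNReal.mul_lt_top ENNReal.ofReal_lt_top hmom2.2
  -- negative part
  have hN : ∫⁻ η, ENNReal.ofReal (-(H η)) ∂ν < ⊤ := by
    have h0 : ∫⁻ η, ENNReal.ofReal (-(H η)) ∂ν
        = ∫⁻ η, ENNReal.ofReal (max (-(H η)) 0) ∂ν := by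
      refine lintegral_congr fun η => ?_
      rcases le_total (-(H η)) 0 with h | h
      · simp [max_eq_right h, ENNReal.ofReal_eq_zero.2 h]
      · rw [max_eq_left h]
    rw [h0, lintegral_eq_lintegral_meas_lt (f := fun η => max (-(H η)) 0) ν
      (Filter.Eventually.of_forall fun η => le_max_right _ _) ((hmeas.neg).max aemeasurable_const)]
    have hbound : ∀ t ∈ Ioi (0:ℝ),
        ν {η | t < max (-(H η)) 0} ≤ ENNReal.ofReal (1/C) * ‖F (-t)‖₊ := by
      intro t ht
      have hsub : {η | t < max (-(H η)) 0} ∩ Ioo 0 1 ⊆ Ioc 0 (F (-t) / C) := by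
        rintro η ⟨hη1, hη2⟩
        have hHη : H η < -t := by
          rcases lt_max_iff.1 (show t < max _ 0 from hη1) with h | h
          · linarith
          · linarith [mem_Ioi.1 ht]
        have hFt : C * η ≤ F (-t) := key2 (-t) _ (hmemC η hη2).2 hHη
        exact ⟨hη2.1, (le_div_iff₀ hCpos).2 (by linarith [mul_comm C η ▸ hFt])⟩
      calc ν {η | t < max (-(H η)) 0}
          = volume ({η | t < max (-(H η)) 0} ∩ Ioo 0 1) :=
            Measure.restrict_apply' measurableSet_Ioo
        _ ≤ volume (Ioc 0 (F (-t) / C)) := measure_mono hsub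
        _ = ENNReal.ofReal (F (-t) / C - 0) := Real.volume_Ioc
        _ = ENNReal.ofReal ((1/C) * F (-t)) := by congr 1; field_simp; ring
        _ = ENNReal.ofReal (1/C) * ENNReal.ofReal (F (-t)) :=
            ENNReal.ofReal_mul (by positivity)
        _ ≤ ENNReal.ofReal (1/C) * ‖F (-t)‖₊ := by
            gcongr
            exact Real.ofReal_le_enorm _
    have hchange : ∫⁻ t in Ioi (0:ℝ), (‖F (-t)‖₊ : ℝ≥0∞) = ∫⁻ s in Iio (0:ℝ), (‖F s‖₊ : ℝ≥0∞) := by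
      have hpre : (Neg.neg ⁻¹' (Iio (0:ℝ))) = Ioi 0 := by
        ext x; simp
      have := (Measure.measurePreserving_neg (volume : Measure ℝ)).setLIntegral_comp_preimage_emb
        (MeasurableEquiv.neg ℝ).measurableEmbedding (fun s => (‖F s‖₊ : ℝ≥0∞)) (Iio 0)
      simpa [hpre] using this
    calc ∫⁻ t in Ioi (0:ℝ), ν {η | t < max (-(H η)) 0}
        ≤ ∫⁻ t in Ioi (0:ℝ), ENNReal.ofReal (1/C) * ‖F (-t)‖₊ := by
          refine lintegral_mono_ae ?_
          filter_upwards [ae_restrict_mem measurableSet_Ioi] with t ht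
          exact hbound t ht
      _ = ENNReal.ofReal (1/C) * ∫⁻ t in Ioi (0:ℝ), (‖F (-t)‖₊ : ℝ≥0∞) :=
          lintegral_const_mul' _ _ ENNReal.ofReal_ne_top
      _ = ENNReal.ofReal (1/C) * ∫⁻ s in Iio (0:ℝ), (‖F s‖₊ : ℝ≥0∞) := by rw [hchange]
      _ < ⊤ := ENNReal.mul_lt_top ENNReal.ofReal_lt_top hmom1.2
  refine ⟨monoH, hmeas.aestronglyMeasurable, ?_⟩
  rw [hasFiniteIntegral_def]
  calc ∫⁻ η, (‖H η‖₊ : ℝ≥0∞) ∂ν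
      = ∫⁻ η, (ENNReal.ofReal (H η) + ENNReal.ofReal (-(H η))) ∂ν :=
        lintegral_congr fun η => nnnorm_decomp _
    _ = (∫⁻ η, ENNReal.ofReal (H η) ∂ν) + ∫⁻ η, ENNReal.ofReal (-(H η)) ∂ν :=
        lintegral_add_left' hmeas.ennreal_ofReal _
    _ < ⊤ := ENNReal.add_lt_top.2 ⟨hP, hN⟩

theorem lipschitz_metric_HS
    (μ₁ μ₂ : Measure ℝ) [IsFiniteMeasure μ₁] [IsFiniteMeasure μ₂]
    (C₁ C₂ : ℝ)
    (hC₁ : C₁ = (μ₁ univ).toReal) (hC₂ : C₂ = (μ₂ univ).toReal)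
    (hC₁pos : 0 < C₁) (hC₂pos : 0 < C₂)
    (F₁ F₂ : ℝ → ℝ)
    (hF₁ : ∀ x, F₁ x = (μ₁ (Iio x)).toReal)
    (hF₂ : ∀ x, F₂ x = (μ₂ (Iio x)).toReal)
    (hmom₁ : IntegrableOn F₁ (Iio 0) ∧ IntegrableOn (fun x => C₁ - F₁ x) (Ioi 0))
    (hmom₂ : IntegrableOn F₂ (Iio 0) ∧ IntegrableOn (fun x => C₂ - F₂ x) (Ioi 0))
    (u₁ u₂ : ℝ → ℝ)
    (hu₁ : Continuous u₁) (hu₂ : Continuous u₂)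
    (hu₁b : ∃ M, ∀ x, |u₁ x| ≤ M) (hu₂b : ∃ M, ∀ x, |u₂ x| ≤ M)
    (χ₀₁ χ₀₂ 𝒰₀₁ 𝒰₀₂ : ℝ → ℝ)
    (hχ₀₁ : ∀ η ∈ Ioo 0 C₁, χ₀₁ η = sSup {x : ℝ | F₁ x < η})
    (hχ₀₂ : ∀ η ∈ Ioo 0 C₂, χ₀₂ η = sSup {x : ℝ | F₂ x < η})
    (h𝒰₀₁ : ∀ η ∈ Ioo 0 C₁, 𝒰₀₁ η = u₁ (χ₀₁ η))
    (h𝒰₀₂ : ∀ η ∈ Ioo 0 C₂, 𝒰₀₂ η = u₂ (χ₀₂ η))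
    (χ₁ χ₂ 𝒰₁ 𝒰₂ : ℝ → ℝ → ℝ)
    (hχ₁ : ∀ t, ∀ η ∈ Ioo 0 C₁,
      χ₁ t η = t ^ 2 / 4 * (η - C₁ / 2) + t * 𝒰₀₁ η + χ₀₁ η)
    (hχ₂ : ∀ t, ∀ η ∈ Ioo 0 C₂,
      χ₂ t η = t ^ 2 / 4 * (η - C₂ / 2) + t * 𝒰₀₂ η + χ₀₂ η)
    (h𝒰₁ : ∀ t, ∀ η ∈ Ioo 0 C₁, 𝒰₁ t η = t / 2 * (η - C₁ / 2) + 𝒰₀₁ η)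
    (h𝒰₂ : ∀ t, ∀ η ∈ Ioo 0 C₂, 𝒰₂ t η = t / 2 * (η - C₂ / 2) + 𝒰₀₂ η)
    (d : ℝ → ℝ≥0∞)
    (hd : ∀ t, d t
      = eLpNorm (fun η => 𝒰₁ t (C₁ * η) - 𝒰₂ t (C₂ * η)) ⊤
          (volume.restrict (Ioo (0:ℝ) 1))
        + eLpNorm (fun η => χ₁ t (C₁ * η) - χ₂ t (C₂ * η)) 1
          (volume.restrict (Ioo (0:ℝ) 1))
        + ENNReal.ofReal |C₁ - C₂|) :
    ∀ t : ℝ, 0 ≤ t →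
      d t < ⊤ ∧ d t ≤ ENNReal.ofReal (1 + t + t ^ 2 / 8) * d 0 := by
  intro t ht
  set ν := volume.restrict (Ioo (0:ℝ) 1) with hν
  haveI : IsProbabilityMeasure ν := ⟨by
    rw [Measure.restrict_apply_univ]; simp [Real.volume_Ioo]⟩
  obtain ⟨mono₁, int₁⟩ := pseudoinv_aux μ₁ C₁ hC₁ hC₁pos F₁ hF₁ hmom₁.1 hmom₁.2
  obtain ⟨mono₂, int₂⟩ := pseudoinv_aux μ₂ C₂ hC₂ hC₂pos F₂ hF₂ hmom₂.1 hmom₂.2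
  set H₁ : ℝ → ℝ := fun η => sSup {x | F₁ x < C₁ * η} with hH₁
  set H₂ : ℝ → ℝ := fun η => sSup {x | F₂ x < C₂ * η} with hH₂
  have hH₁m : AEMeasurable H₁ ν := aemeasurable_restrict_of_monotoneOn measurableSet_Ioo mono₁
  have hH₂m : AEMeasurable H₂ ν := aemeasurable_restrict_of_monotoneOn measurableSet_Ioo mono₂
  obtain ⟨M₁, hM₁⟩ := hu₁b
  obtain ⟨M₂, hM₂⟩ := hu₂b
  set V : ℝ → ℝ := fun η => u₁ (H₁ η) - u₂ (H₂ η) with hV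
  set W : ℝ → ℝ := fun η => H₁ η - H₂ η with hW
  set L : ℝ → ℝ := fun η => (C₁ - C₂) * (η - 1/2) with hL
  set E : ℝ≥0∞ := ENNReal.ofReal |C₁ - C₂| with hE'
  have hVm : AEMeasurable V ν :=
    (hu₁.measurable.comp_aemeasurable hH₁m).sub (hu₂.measurable.comp_aemeasurable hH₂m)
  have hWint : Integrable W ν := int₁.sub int₂
  have hLm : ∀ c : ℝ, AEStronglyMeasurable (fun η => c * L η) ν := fun c =>
    ((continuous_const.mul
      ((continuous_const).mul (continuous_id.sub continuous_const))
        : Continuous fun η : ℝ => c * ((C₁ - C₂) * (η - 1/2)))).aestronglyMeasurable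
  have haemem : ∀ᵐ η ∂ν, η ∈ Ioo (0:ℝ) 1 := ae_restrict_mem measurableSet_Ioo
  have hmem₁ : ∀ η ∈ Ioo (0:ℝ) 1, C₁ * η ∈ Ioo 0 C₁ := fun η hη =>
    ⟨mul_pos hC₁pos hη.1, by nlinarith [hη.2, hη.1]⟩
  have hmem₂ : ∀ η ∈ Ioo (0:ℝ) 1, C₂ * η ∈ Ioo 0 C₂ := fun η hη =>
    ⟨mul_pos hC₂pos hη.1, by nlinarith [hη.2, hη.1]⟩
  have hU : ∀ s : ℝ, (fun η => 𝒰₁ s (C₁ * η) - 𝒰₂ s (C₂ * η)) =ᵐ[ν]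
      fun η => s/2 * L η + V η := by
    intro s
    filter_upwards [haemem] with η hη
    have h1 := hmem₁ η hη
    have h2 := hmem₂ η hη
    rw [h𝒰₁ s _ h1, h𝒰₂ s _ h2, h𝒰₀₁ _ h1, h𝒰₀₂ _ h2, hχ₀₁ _ h1, hχ₀₂ _ h2]
    simp only [hV, hL, hH₁, hH₂]
    ring
  have hX : ∀ s : ℝ, (fun η => χ₁ s (C₁ * η) - χ₂ s (C₂ * η)) =ᵐ[ν]
      fun η => s^2/4 * L η + (s * V η + W η) := by
    intro s
    filter_upwards [haemem] with η hη
    have h1 := hmem₁ η hη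
    have h2 := hmem₂ η hη
    rw [hχ₁ s _ h1, hχ₂ s _ h2, h𝒰₀₁ _ h1, h𝒰₀₂ _ h2, hχ₀₁ _ h1, hχ₀₂ _ h2]
    simp only [hV, hW, hL, hH₁, hH₂]
    ring
  have hVbound : ∀ᵐ η ∂ν, ‖V η‖ ≤ M₁ + M₂ := by
    filter_upwards with η
    rw [Real.norm_eq_abs]
    have h1 := abs_le.1 (hM₁ (H₁ η))
    have h2 := abs_le.1 (hM₂ (H₂ η))
    rw [abs_le]
    simp only [hV]
    constructor <;> linarith [h1.1, h1.2, h2.1, h2.2]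
  have hA : eLpNorm V ⊤ ν ≤ ENNReal.ofReal (M₁ + M₂) := by
    rw [eLpNorm_exponent_top]
    exact eLpNormEssSup_le_of_ae_bound hVbound
  have hAfin : eLpNorm V ⊤ ν < ⊤ := lt_of_le_of_lt hA ENNReal.ofReal_lt_top
  have hBfin : eLpNorm W 1 ν < ⊤ := (memLp_one_iff_integrable.2 hWint).eLpNorm_lt_top
  have hLbound : ∀ c : ℝ, 0 ≤ c → ∀ᵐ η ∂ν, ‖c * L η‖ ≤ c/2 * |C₁ - C₂| := by
    intro c hc
    filter_upwards [haemem] with η hη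
    rw [Real.norm_eq_abs]
    have h1 : |η - 1/2| ≤ 1/2 := abs_le.2 ⟨by linarith [hη.1], by linarith [hη.2]⟩
    simp only [hL]
    calc |c * ((C₁ - C₂) * (η - 1/2))| = c * |C₁ - C₂| * |η - 1/2| := by
          rw [abs_mul, abs_mul, abs_of_nonneg hc]; ring
      _ ≤ c * |C₁ - C₂| * (1/2) := by
          apply mul_le_mul_of_nonneg_left h1 (by positivity)
      _ = c/2 * |C₁ - C₂| := by ring
  have hEeq : ∀ c : ℝ, 0 ≤ c →
      ENNReal.ofReal (c/2 * |C₁ - C₂|) = ENNReal.ofReal (c/2) * E := by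
    intro c hc
    rw [hE']
    exact ENNReal.ofReal_mul (by positivity)
  have hS : eLpNorm (fun η => 𝒰₁ t (C₁ * η) - 𝒰₂ t (C₂ * η)) ⊤ ν
      ≤ ENNReal.ofReal (t/2/2) * E + eLpNorm V ⊤ ν := by
    rw [eLpNorm_congr_ae (hU t)]
    refine le_trans (eLpNorm_add_le (hLm (t/2)) hVm.aestronglyMeasurable le_top) ?_
    gcongr
    rw [eLpNorm_exponent_top]
    refine le_trans (eLpNormEssSup_le_of_ae_bound (hLbound (t/2) (by linarith))) ?_
    exact (hEeq (t/2) (by linarith)).le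
  have hT : eLpNorm (fun η => χ₁ t (C₁ * η) - χ₂ t (C₂ * η)) 1 ν
      ≤ ENNReal.ofReal (t^2/4/2) * E + (ENNReal.ofReal t * eLpNorm V ⊤ ν + eLpNorm W 1 ν) := by
    rw [eLpNorm_congr_ae (hX t)]
    refine le_trans (eLpNorm_add_le (hLm (t^2/4))
      ((aemeasurable_const.mul hVm).add hWint.aemeasurable).aestronglyMeasurable le_rfl) ?_
    gcongr
    · refine le_trans (eLpNorm_le_of_ae_bound (hLbound (t^2/4) (by positivity))) ?_
      rw [measure_univ, ENNReal.one_rpow, one_mul]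
      exact (hEeq (t^2/4) (by positivity)).le
    · refine le_trans (eLpNorm_add_le
        (aemeasurable_const.mul hVm).aestronglyMeasurable hWint.1 le_rfl) ?_
      gcongr
      have h1 : eLpNorm (fun η => t * V η) 1 ν = ‖t‖₊ • eLpNorm V 1 ν :=
        eLpNorm_const_smul t V 1 ν
      rw [h1, ENNReal.smul_def, smul_eq_mul]
      gcongr
      · exact (Real.enorm_eq_ofReal ht).le
      · exact eLpNorm_le_eLpNorm_of_exponent_le le_top hVm.aestronglyMeasurable
  have h24 : (t/2/2 : ℝ) = t/4 := by ring
  have h48 : (t^2/4/2 : ℝ) = t^2/8 := by ring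
  rw [h24] at hS
  rw [h48] at hT
  constructor
  · rw [hd t]
    refine ENNReal.add_lt_top.2 ⟨ENNReal.add_lt_top.2 ⟨?_, ?_⟩, ENNReal.ofReal_lt_top⟩
    · refine lt_of_le_of_lt hS (ENNReal.add_lt_top.2 ⟨?_, hAfin⟩)
      exact ENNReal.mul_lt_top ENNReal.ofReal_lt_top (hE' ▸ ENNReal.ofReal_lt_top)
    · refine lt_of_le_of_lt hT (ENNReal.add_lt_top.2 ⟨?_, ENNReal.add_lt_top.2 ⟨?_, hBfin⟩⟩)
      · exact ENNReal.mul_lt_top ENNReal.ofReal_lt_top (hE' ▸ ENNReal.ofReal_lt_top)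
      · exact ENNReal.mul_lt_top ENNReal.ofReal_lt_top hAfin
  · have hd0 : d 0 = eLpNorm V ⊤ ν + eLpNorm W 1 ν + E := by
      rw [hd 0]
      congr 1
      congr 1
      · exact eLpNorm_congr_ae ((hU 0).trans (Filter.Eventually.of_forall fun η => by norm_num))
      · exact eLpNorm_congr_ae ((hX 0).trans (Filter.Eventually.of_forall fun η => by norm_num))
    rw [hd t, hd0]
    set A := eLpNorm V ⊤ ν
    set B := eLpNorm W 1 ν
    calc eLpNorm (fun η => 𝒰₁ t (C₁ * η) - 𝒰₂ t (C₂ * η)) ⊤ ν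
          + eLpNorm (fun η => χ₁ t (C₁ * η) - χ₂ t (C₂ * η)) 1 ν + E
        ≤ (ENNReal.ofReal (t/4) * E + A)
            + (ENNReal.ofReal (t^2/8) * E + (ENNReal.ofReal t * A + B)) + E :=
          add_le_add (add_le_add hS hT) le_rfl
      _ = (A + B + E) + (ENNReal.ofReal (t/4) * E + ENNReal.ofReal t * A)
            + ENNReal.ofReal (t^2/8) * E := by ring
      _ ≤ (A + B + E) + (ENNReal.ofReal t * E + ENNReal.ofReal t * A)
            + ENNReal.ofReal (t^2/8) * E :=
          add_le_add (add_le_add le_rfl (add_le_add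
            (mul_le_mul_left (ENNReal.ofReal_le_ofReal (by linarith)) E) le_rfl)) le_rfl
      _ ≤ (A + B + E) + ENNReal.ofReal t * (A + B + E)
            + ENNReal.ofReal (t^2/8) * (A + B + E) := by
          refine add_le_add (add_le_add le_rfl ?_) (mul_le_mul_right le_add_self _)
          rw [← mul_add]
          refine mul_le_mul_right ?_ _
          calc E + A = A + E := add_comm _ _
            _ ≤ A + (B + E) := add_le_add le_rfl le_add_self
            _ = A + B + E := (add_assoc _ _ _).symm
      _ = (1 + ENNReal.ofReal t + ENNReal.ofReal (t^2/8)) * (A + B + E) := by ring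
      _ = ENNReal.ofReal (1 + t + t^2/8) * (A + B + E) := by
          rw [ENNReal.ofReal_add (by linarith) (by positivity),
            ENNReal.ofReal_add (by norm_num) ht, ENNReal.ofReal_one]
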